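/- Let φ : [R_i, R_o] → ℝ be continuous with 0 < R_i < R_o, and define v(R) = ∫_{R_i}^{R} (1/r⁴)(∫_{R_i}^{r} s³ φ(s) ds) dr. Then the function (δF)_p(R) := v(R)·R satisfies (δF)_p''(R) + (2/R)(δF)_p'(R) - 2(δF)_p(R)/R² = φ(R) for all R in (R_i, R_o). -/

import Mathlib

open MeasureTheory intervalIntegral Set Filter

private lemma aux3 (Ri Ro : ℝ) (hRi : 0 < Ri) (φ g v : ℝ → ℝ)
    (hg : ∀ r ∈ Set.Ioo Ri Ro, HasDerivAt g (r ^ 3 * φ r) r)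
    (hv : ∀ u ∈ Set.Ioo Ri Ro, HasDerivAt v (1 / u ^ 4 * g u) u) :
    ∀ R ∈ Set.Ioo Ri Ro,
      deriv (deriv (fun u => v u * u)) R + (2 / R) * deriv (fun u => v u * u) R
        - 2 * (v R * R) / R ^ 2 = φ R := by
  intro R hR
  have hR0 : 0 < R := lt_trans hRi hR.1
  have hRne : R ≠ 0 := ne_of_gt hR0
  have hF' : ∀ u ∈ Set.Ioo Ri Ro,
      HasDerivAt (fun u => v u * u) (1 / u ^ 4 * g u * u + v u) u := by
    intro u hu
    simpa using (hv u hu).fun_mul (hasDerivAt_id u)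
  have hderiv1 : deriv (fun u => v u * u) =ᶠ[nhds R]
      fun u => 1 / u ^ 4 * g u * u + v u := by
    filter_upwards [isOpen_Ioo.mem_nhds hR] with u hu
    exact (hF' u hu).deriv
  have h2 : deriv (deriv (fun u => v u * u)) R
      = deriv (fun u => 1 / u ^ 4 * g u * u + v u) R := hderiv1.deriv_eq
  have h1 : HasDerivAt (fun u : ℝ => 1 / u ^ 4) (-4 / R ^ 5) R := by
    have h4 : HasDerivAt (fun u : ℝ => u ^ 4) (4 * R ^ 3) R := by
      simpa using hasDerivAt_pow 4 R
    have hinv := h4.fun_inv (pow_ne_zero 4 hRne)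
    have heq : (fun u : ℝ => (u ^ 4)⁻¹) = fun u : ℝ => 1 / u ^ 4 := by
      funext u; rw [one_div]
    rw [heq] at hinv
    refine hinv.congr_deriv ?_
    rw [div_eq_div_iff (pow_ne_zero 2 (pow_ne_zero 4 hRne)) (pow_ne_zero 5 hRne)]
    ring
  have hprod : HasDerivAt (fun u => 1 / u ^ 4 * g u * u)
      ((-4 / R ^ 5 * g R + 1 / R ^ 4 * (R ^ 3 * φ R)) * R + 1 / R ^ 4 * g R) R := by
    simpa using (h1.fun_mul (hg R hR)).fun_mul (hasDerivAt_id R)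
  have hG := hprod.fun_add (hv R hR)
  rw [h2, hG.deriv, (hF' R hR).deriv]
  field_simp
  ring

theorem stmt3 (Ri Ro : ℝ) (hRi : 0 < Ri) (hRo : Ri < Ro)
    (φ : ℝ → ℝ) (hφ : ContinuousOn φ (Set.Icc Ri Ro)) :
    ∀ R ∈ Set.Ioo Ri Ro,
      deriv (deriv (fun u : ℝ =>
          (∫ r in Ri..u, (1/r^4) * ∫ s in Ri..r, s^3 * φ s) * u)) R
        + (2/R) * deriv (fun u : ℝ =>
          (∫ r in Ri..u, (1/r^4) * ∫ s in Ri..r, s^3 * φ s) * u) R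
        - 2 * ((∫ r in Ri..R, (1/r^4) * ∫ s in Ri..r, s^3 * φ s) * R) / R^2
      = φ R := by
  have hle : Ri ≤ Ro := le_of_lt hRo
  set f : ℝ → ℝ := fun s => s ^ 3 * φ s with hfdef
  set g : ℝ → ℝ := fun r => ∫ s in Ri..r, f s with hgdef
  set h : ℝ → ℝ := fun r => 1 / r ^ 4 * g r with hhdef
  have hf_cont : ContinuousOn f (Set.Icc Ri Ro) :=
    (continuous_pow 3).continuousOn.mul hφ
  have hf_int : IntegrableOn f (Set.Icc Ri Ro) := hf_cont.integrableOn_Icc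
  have hg_cont : ContinuousOn g (Set.Icc Ri Ro) := by
    have := continuousOn_primitive_interval (a := Ri) (b := Ro) (f := f) (μ := volume)
      (by rwa [uIcc_of_le hle])
    rwa [uIcc_of_le hle] at this
  have hne : ∀ r ∈ Set.Icc Ri Ro, r ^ 4 ≠ 0 := fun r hr =>
    pow_ne_zero 4 (ne_of_gt (lt_of_lt_of_le hRi hr.1))
  have hh_cont : ContinuousOn h (Set.Icc Ri Ro) :=
    (continuousOn_const.div ((continuous_pow 4).continuousOn) hne).mul hg_cont
  have hg' : ∀ r ∈ Set.Ioo Ri Ro, HasDerivAt g (r ^ 3 * φ r) r := by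
    intro r hr
    have hnhds : Set.Icc Ri Ro ∈ nhds r := Icc_mem_nhds hr.1 hr.2
    have hsub : Set.uIcc Ri r ⊆ Set.Icc Ri Ro := by
      rw [uIcc_of_le hr.1.le]
      exact Icc_subset_Icc le_rfl hr.2.le
    exact integral_hasDerivAt_right ((hf_int.mono_set hsub).intervalIntegrable)
      ⟨Set.Icc Ri Ro, hnhds, hf_cont.aestronglyMeasurable measurableSet_Icc⟩
      (hf_cont.continuousAt hnhds)
  have hv' : ∀ u ∈ Set.Ioo Ri Ro,
      HasDerivAt (fun u => ∫ r in Ri..u, h r) (1 / u ^ 4 * g u) u := by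
    intro u hu
    have hnhds : Set.Icc Ri Ro ∈ nhds u := Icc_mem_nhds hu.1 hu.2
    have hsub : Set.uIcc Ri u ⊆ Set.Icc Ri Ro := by
      rw [uIcc_of_le hu.1.le]
      exact Icc_subset_Icc le_rfl hu.2.le
    exact integral_hasDerivAt_right ((hh_cont.integrableOn_Icc.mono_set hsub).intervalIntegrable)
      ⟨Set.Icc Ri Ro, hnhds, hh_cont.aestronglyMeasurable measurableSet_Icc⟩
      (hh_cont.continuousAt hnhds)
  exact aux3 Ri Ro hRi φ g (fun u => ∫ r in Ri..u, h r) hg' hv'
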